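/- The WEAT effect size is not unbiased-trustworthy: there exist dimension d ≥ 2, unit vectors a, b (attribute sets A={a}, B={b}) and targets t_1, t_2, t_3, t_4 such that the effect size d({t_1,t_2},{t_3,t_4},A,B) = 0 while s(t_1,A) ≠ s(t_1,B), i.e., t_1 is individually biased. -/

import Mathlib

/-- Cosine similarity in `ℝ^d`. -/
noncomputable def cosSim {d : ℕ} (u v : EuclideanSpace ℝ (Fin d)) : ℝ :=
  (inner ℝ u v : ℝ) / (‖u‖ * ‖v‖)

lemma cosSim_single_self : cosSim (EuclideanSpace.single (0 : Fin 2) (1:ℝ))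
    (EuclideanSpace.single (0 : Fin 2) (1:ℝ)) = 1 := by
  simp [cosSim, EuclideanSpace.inner_single_left, EuclideanSpace.single_apply,
    EuclideanSpace.norm_single]

lemma cosSim_single_ne (i j : Fin 2) (h : i ≠ j) :
    cosSim (EuclideanSpace.single i (1:ℝ)) (EuclideanSpace.single j (1:ℝ)) = 0 := by
  simp [cosSim, EuclideanSpace.inner_single_left, EuclideanSpace.single_apply, h, h.symm]

/-- WEAT's effect size is not unbiased-trustworthy: there are a dimension `d ≥ 2`,
unit attribute vectors `a, b` and nonzero targets `t₁, t₂, t₃, t₄` such that the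
effect size `d({t₁,t₂},{t₃,t₄},{a},{b})` is well-defined (positive standard
deviation of the associations) and equals `0`, while `s(t₁,{a}) ≠ s(t₁,{b})`. -/
theorem weat_effect_size_not_unbiased_trustworthy :
    ∃ (d : ℕ), 2 ≤ d ∧ ∃ (a b t₁ t₂ t₃ t₄ : EuclideanSpace ℝ (Fin d)),
      ‖a‖ = 1 ∧ ‖b‖ = 1 ∧ t₁ ≠ 0 ∧ t₂ ≠ 0 ∧ t₃ ≠ 0 ∧ t₄ ≠ 0 ∧
      (let s : EuclideanSpace ℝ (Fin d) → ℝ := fun w => cosSim w a - cosSim w b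
       let μ : ℝ := (s t₁ + s t₂ + s t₃ + s t₄) / 4
       let σ : ℝ := Real.sqrt (((s t₁ - μ) ^ 2 + (s t₂ - μ) ^ 2
            + (s t₃ - μ) ^ 2 + (s t₄ - μ) ^ 2) / 4)
       0 < σ ∧ ((s t₁ + s t₂) / 2 - (s t₃ + s t₄) / 2) / σ = 0
         ∧ cosSim t₁ a ≠ cosSim t₁ b) := by
  refine ⟨2, le_refl 2, EuclideanSpace.single 0 1, EuclideanSpace.single 1 1,
    EuclideanSpace.single 0 1, EuclideanSpace.single 1 1,
    EuclideanSpace.single 0 1, EuclideanSpace.single 1 1, ?_, ?_, ?_, ?_, ?_, ?_, ?_⟩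
  · simp [EuclideanSpace.norm_single]
  · simp [EuclideanSpace.norm_single]
  · intro h
    have := congrArg (· 0) h
    simp [EuclideanSpace.single_apply] at this
  · intro h
    have := congrArg (· 1) h
    simp [EuclideanSpace.single_apply] at this
  · intro h
    have := congrArg (· 0) h
    simp [EuclideanSpace.single_apply] at this
  · intro h
    have := congrArg (· 1) h
    simp [EuclideanSpace.single_apply] at this
  · have h00 := cosSim_single_self
    have h01 := cosSim_single_ne 0 1 (by decide)
    have h10 := cosSim_single_ne 1 0 (by decide)
    have h11 : cosSim (EuclideanSpace.single (1 : Fin 2) (1:ℝ))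
        (EuclideanSpace.single (1 : Fin 2) (1:ℝ)) = 1 := by
      simp [cosSim, EuclideanSpace.inner_single_left, EuclideanSpace.single_apply,
        EuclideanSpace.norm_single]
    simp only [h00, h01, h10, h11]
    norm_num
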